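/- Let a, b, μ > 0, and suppose the energy E satisfies μ·max{a, b} < E < μ·min{(2a² + b²)/(2a), (2b² + a²)/(2b)}. Define w(s) = √(a²cos²s + b²sin²s). Then for every s ∈ ℝ: E > μ·w(s) and μ·(a² + b² + a²cos²s + b²sin²s)/(2·w(s)) > E. -/

import Mathlib

open Real

lemma key_aux (a b μ E W c t : ℝ) (ha : 0 < a) (hb : 0 < b) (hμ : 0 < μ)
    (hab : a ≤ b) (hc : 0 ≤ c) (ht : 0 ≤ t) (hct : c + t = 1)
    (hW : 0 ≤ W) (hWsq : W ^ 2 = a ^ 2 * c + b ^ 2 * t)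
    (hElow : μ * b < E) (hEhigh : E < μ * ((2 * b ^ 2 + a ^ 2) / (2 * b))) :
    E > μ * W ∧ μ * (a ^ 2 + b ^ 2 + a ^ 2 * c + b ^ 2 * t) / (2 * W) > E := by
  have hab2 : a ^ 2 ≤ b ^ 2 := by nlinarith
  have hx : 0 < a ^ 2 * c + b ^ 2 * t := by
    nlinarith [mul_nonneg (sub_nonneg.2 hab2) ht,
      mul_pos (pow_pos ha 2) (show (0:ℝ) < c + t by linarith)]
  have hW0 : 0 < W := by
    rcases eq_or_lt_of_le hW with h | h
    · exfalso; rw [← h] at hWsq; nlinarith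
    · exact h
  have hbsum : b ^ 2 * (c + t) = b ^ 2 := by rw [hct]; ring
  have hsqle : W ^ 2 ≤ b ^ 2 := by
    nlinarith [mul_nonneg (sub_nonneg.2 hab2) hc]
  have hWb : W ≤ b := by nlinarith
  have hE2b : E * (2 * b) < μ * (2 * b ^ 2 + a ^ 2) := by
    rw [← mul_div_assoc, lt_div_iff₀ (by positivity)] at hEhigh
    exact hEhigh
  constructor
  · nlinarith
  · rw [gt_iff_lt, lt_div_iff₀ (by positivity)]
    have hbW : b * W ≤ a ^ 2 + b ^ 2 := by nlinarith [mul_le_mul_of_nonneg_left hWb hb.le]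
    have hmain : E * (2 * W) * b < μ * (a ^ 2 + b ^ 2 + W ^ 2) * b := by
      nlinarith [mul_lt_mul_of_pos_right hE2b hW0,
        mul_nonneg (mul_nonneg hμ.le (sub_nonneg.2 hWb)) (sub_nonneg.2 hbW)]
    have hlt : E * (2 * W) < μ * (a ^ 2 + b ^ 2 + W ^ 2) := (mul_lt_mul_iff_of_pos_right hb).1 hmain
    have heq : μ * (a ^ 2 + b ^ 2 + a ^ 2 * c + b ^ 2 * t) = μ * (a ^ 2 + b ^ 2 + W ^ 2) := by
      rw [hWsq]; ring
    linarith

theorem stmt_11 (a b μ E : ℝ) (ha : 0 < a) (hb : 0 < b) (hμ : 0 < μ)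
    (w : ℝ → ℝ)
    (hw : ∀ s, w s = Real.sqrt (a ^ 2 * Real.cos s ^ 2 + b ^ 2 * Real.sin s ^ 2))
    (hElow : μ * max a b < E)
    (hEhigh : E < μ * min ((2 * a ^ 2 + b ^ 2) / (2 * a)) ((2 * b ^ 2 + a ^ 2) / (2 * b))) :
    ∀ s : ℝ, E > μ * w s ∧
      μ * (a ^ 2 + b ^ 2 + a ^ 2 * Real.cos s ^ 2 + b ^ 2 * Real.sin s ^ 2) / (2 * w s) > E := by
  intro s
  have hct : Real.cos s ^ 2 + Real.sin s ^ 2 = 1 := by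
    rw [add_comm]; exact Real.sin_sq_add_cos_sq s
  have hc : 0 ≤ Real.cos s ^ 2 := sq_nonneg _
  have ht : 0 ≤ Real.sin s ^ 2 := sq_nonneg _
  have hnn : 0 ≤ a ^ 2 * Real.cos s ^ 2 + b ^ 2 * Real.sin s ^ 2 := by positivity
  have hW : 0 ≤ w s := by rw [hw]; exact Real.sqrt_nonneg _
  have hWsq : (w s) ^ 2 = a ^ 2 * Real.cos s ^ 2 + b ^ 2 * Real.sin s ^ 2 := by
    rw [hw]; exact Real.sq_sqrt hnn
  rcases le_total a b with hab | hab
  · have h1 : μ * b < E := by rwa [max_eq_right hab] at hElow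
    have h2 : E < μ * ((2 * b ^ 2 + a ^ 2) / (2 * b)) :=
      lt_of_lt_of_le hEhigh (mul_le_mul_of_nonneg_left (min_le_right _ _) hμ.le)
    exact key_aux a b μ E (w s) _ _ ha hb hμ hab hc ht hct hW hWsq h1 h2
  · have h1 : μ * a < E := by rwa [max_eq_left hab] at hElow
    have h2 : E < μ * ((2 * a ^ 2 + b ^ 2) / (2 * a)) :=
      lt_of_lt_of_le hEhigh (mul_le_mul_of_nonneg_left (min_le_left _ _) hμ.le)
    have key := key_aux b a μ E (w s) (Real.sin s ^ 2) (Real.cos s ^ 2) hb ha hμ hab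
      ht hc (by linarith) hW (by rw [hWsq]; ring) h1 h2
    refine ⟨key.1, ?_⟩
    have h3 := key.2
    rw [show a ^ 2 + b ^ 2 + a ^ 2 * Real.cos s ^ 2 + b ^ 2 * Real.sin s ^ 2
      = b ^ 2 + a ^ 2 + b ^ 2 * Real.sin s ^ 2 + a ^ 2 * Real.cos s ^ 2 from by ring]
    exact h3
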